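/- arXiv:2307.01272 — 2 statements merged into one kernel-verified Lean document; each statement's English description precedes it below -/
import Mathlib

section
/- For all odd integers t ≥ 1 and all integers n ≥ 0, the coefficient of q^{8n+3} in the formal power series ( φ(q)·φ(q²)²·φ(q⁴)⁴ )^t over ℤ is divisible by 8. -/
open scoped Classical

/-- The infinite product `∏_{k ≥ 0} f k` of formal power series, in the situation where,
for each fixed power of `q`, only finitely many factors contribute: the coefficient of
`q^n` is read off from the product of the factors `f 0, …, f n` (all later factors are
assumed to be `1 + O(q^{n+1})`). -/
noncomputable def seriesProd (f : ℕ → PowerSeries ℤ) : PowerSeries ℤ :=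
  PowerSeries.mk fun n => PowerSeries.coeff n (∏ k ∈ Finset.range (n + 1), f k)

/-- The generating function `∏_{k ≥ 1} (1 - q^{2k})^t / (1 - q^k)^{2t}`
for `t`-colored overpartitions. -/
noncomputable def overGF (t : ℕ) : PowerSeries ℤ :=
  seriesProd fun k =>
    (1 - (PowerSeries.X : PowerSeries ℤ) ^ (2 * (k + 1))) ^ t *
      (PowerSeries.invOfUnit (1 - (PowerSeries.X : PowerSeries ℤ) ^ (k + 1)) 1) ^ (2 * t)

/-- `p̄_{-t}(n)`, the number of `t`-colored overpartitions of `n`: the coefficient of `q^n`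
in `∏_{k ≥ 1} (1 - q^{2k})^t / (1 - q^k)^{2t}`. -/
noncomputable def pbar (t n : ℕ) : ℤ :=
  PowerSeries.coeff n (overGF t)

/-- Ramanujan's theta function `φ(q^m) = 1 + 2 ∑_{k ≥ 1} q^{m k²}`. -/
noncomputable def phi (m : ℕ) : PowerSeries ℤ :=
  PowerSeries.mk fun n =>
    if n = 0 then 1 else if ∃ k : ℕ, 0 < k ∧ n = m * k ^ 2 then 2 else 0

/-- `φ(-q) = 1 + 2 ∑_{k ≥ 1} (-1)^{k²} q^{k²}` (note `(-1)^{k²} = (-1)^n` at `n = k²`). -/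
noncomputable def phiNeg : PowerSeries ℤ :=
  PowerSeries.mk fun n =>
    if n = 0 then 1 else if ∃ k : ℕ, 0 < k ∧ n = k ^ 2 then 2 * (-1) ^ n else 0

/-- Ramanujan's theta function `ψ(q^m) = ∑_{k ≥ 0} q^{m·k(k+1)/2}`. -/
noncomputable def psi (m : ℕ) : PowerSeries ℤ :=
  PowerSeries.mk fun n => if ∃ k : ℕ, 2 * n = m * (k * (k + 1)) then 1 else 0

/-- `f_r = ∏_{j ≥ 1} (1 - q^{r j})`. -/
noncomputable def fr (r : ℕ) : PowerSeries ℤ :=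
  seriesProd fun j => 1 - (PowerSeries.X : PowerSeries ℤ) ^ (r * (j + 1))

/-- The "theta tail" `∑_{k ≥ 1} q^{m k²}` over `ZMod 8`. -/
noncomputable def Aaux (m : ℕ) : PowerSeries (ZMod 8) :=
  PowerSeries.mk fun n => if ∃ k : ℕ, 0 < k ∧ n = m * k ^ 2 then 1 else 0

lemma sq_mod8 (k : ℕ) : k ^ 2 % 8 = 0 ∨ k ^ 2 % 8 = 1 ∨ k ^ 2 % 8 = 4 := by
  have h : k ^ 2 % 8 = (k % 8) ^ 2 % 8 := by rw [Nat.pow_mod]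
  have hlt : k % 8 < 8 := Nat.mod_lt _ (by norm_num)
  interval_cases h' : k % 8 <;> simp_all

lemma eight_eq_zero : (8 : PowerSeries (ZMod 8)) = 0 := by
  rw [← map_ofNat ((PowerSeries.C (R := ZMod 8))) 8, show (8 : ZMod 8) = 0 from by decide,
    map_zero]

lemma map_phi (m : ℕ) (hm : 1 ≤ m) :
    PowerSeries.map (Int.castRingHom (ZMod 8)) (phi m) = 1 + 2 * Aaux m := by
  have h2 : (2 : PowerSeries (ZMod 8)) = (PowerSeries.C (R := ZMod 8)) 2 :=
    (map_ofNat _ 2).symm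
  ext j
  rw [PowerSeries.coeff_map, map_add, h2, PowerSeries.coeff_C_mul,
    PowerSeries.coeff_one]
  simp only [phi, Aaux, PowerSeries.coeff_mk]
  by_cases hj : j = 0
  · subst hj
    have hfalse : ¬ ∃ k : ℕ, 0 < k ∧ 0 = m * k ^ 2 := by
      rintro ⟨k, hk, hk0⟩
      have : 0 < m * k ^ 2 := by positivity
      omega
    rw [if_pos rfl, if_pos rfl, if_neg hfalse, mul_zero, add_zero]
    norm_num
  · simp only [hj, if_false, if_neg hj]
    split_ifs <;> norm_num

/-- For all odd `t ≥ 1` and all `n ≥ 0`, the coefficient of `q^(8n+3)` in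
`(φ(q)·φ(q²)²·φ(q⁴)⁴)^t` is divisible by 8. -/
theorem coeff_phi_prod_pow_3 (t : ℕ) (ht1 : 1 ≤ t) (ht : Odd t) (n : ℕ) :
    (8 : ℤ) ∣ PowerSeries.coeff (8 * n + 3) ((phi 1 * phi 2 ^ 2 * phi 4 ^ 4) ^ t) := by
  set N := 8 * n + 3 with hN
  set a := Aaux 1
  set b := Aaux 2
  set c := Aaux 4
  set Y : PowerSeries (ZMod 8) := 2 * a + 4 * b + 4 * b ^ 2 with hY
  have h8 := eight_eq_zero
  have h2C : (2 : PowerSeries (ZMod 8)) = (PowerSeries.C (R := ZMod 8)) 2 := (map_ofNat _ 2).symm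
  have h4C : (4 : PowerSeries (ZMod 8)) = (PowerSeries.C (R := ZMod 8)) 4 := (map_ofNat _ 4).symm
  -- coefficient facts at N
  have ha : PowerSeries.coeff N a = 0 := by
    simp only [a, Aaux, PowerSeries.coeff_mk]
    rw [if_neg]
    rintro ⟨k, hk, hk2⟩
    have hs := sq_mod8 k
    obtain ⟨K, hK⟩ : ∃ K, K = k ^ 2 := ⟨_, rfl⟩
    rw [← hK] at hk2 hs
    omega
  have hb : PowerSeries.coeff N b = 0 := by
    simp only [b, Aaux, PowerSeries.coeff_mk]
    rw [if_neg]
    rintro ⟨k, hk, hk2⟩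
    obtain ⟨K, hK⟩ : ∃ K, K = k ^ 2 := ⟨_, rfl⟩
    rw [← hK] at hk2
    omega
  have hbodd : ∀ j : ℕ, j % 2 = 1 → PowerSeries.coeff j b = 0 := by
    intro j hj
    simp only [b, Aaux, PowerSeries.coeff_mk]
    rw [if_neg]
    rintro ⟨k, hk, hk2⟩
    obtain ⟨K, hK⟩ : ∃ K, K = k ^ 2 := ⟨_, rfl⟩
    rw [← hK] at hk2
    omega
  have hb2 : PowerSeries.coeff N (b ^ 2) = 0 := by
    rw [pow_two, PowerSeries.coeff_mul]
    apply Finset.sum_eq_zero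
    rintro ⟨i, j⟩ hij
    rw [Finset.HasAntidiagonal.mem_antidiagonal] at hij
    rcases Nat.even_or_odd i with hi | hi
    · have hi2 : i % 2 = 0 := Nat.even_iff.mp hi
      have : j % 2 = 1 := by omega
      rw [hbodd j this, mul_zero]
    · have : i % 2 = 1 := Nat.odd_iff.mp hi
      rw [hbodd i this, zero_mul]
  have ha2 : PowerSeries.coeff N (a ^ 2) = 0 := by
    rw [pow_two, PowerSeries.coeff_mul]
    apply Finset.sum_eq_zero
    rintro ⟨i, j⟩ hij
    rw [Finset.HasAntidiagonal.mem_antidiagonal] at hij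
    simp only [a, Aaux, PowerSeries.coeff_mk]
    split_ifs with h1 h2
    · exfalso
      obtain ⟨k1, -, hk1⟩ := h1
      obtain ⟨k2, -, hk2⟩ := h2
      have e1 := sq_mod8 k1
      have e2 := sq_mod8 k2
      obtain ⟨K1, hK1⟩ : ∃ K, K = k1 ^ 2 := ⟨_, rfl⟩
      obtain ⟨K2, hK2⟩ : ∃ K, K = k2 ^ 2 := ⟨_, rfl⟩
      rw [← hK1] at hk1 e1
      rw [← hK2] at hk2 e2
      omega
    · rw [mul_zero]
    · rw [zero_mul]
    · rw [zero_mul]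
  -- algebraic identities mod 8
  have hc4 : (1 + 2 * c) ^ 4 = 1 := by
    have e : (1 + 2 * c) ^ 4 = 1 + 8 * (c + 3 * c ^ 2 + 4 * c ^ 3 + 2 * c ^ 4) := by ring
    rw [e, h8, zero_mul, add_zero]
  have hab : (1 + 2 * a) * (1 + 2 * b) ^ 2 = 1 + Y := by
    have e : (1 + 2 * a) * (1 + 2 * b) ^ 2 =
        1 + (2 * a + 4 * b + 4 * b ^ 2) + 8 * (a * b + a * b ^ 2) := by ring
    rw [e, h8, zero_mul, add_zero, hY]
  have hY2 : Y ^ 2 = 4 * a ^ 2 := by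
    have e : Y ^ 2 = 4 * a ^ 2 +
        8 * (2 * a * b + 2 * a * b ^ 2 + 2 * b ^ 2 + 4 * b ^ 3 + 2 * b ^ 4) := by
      rw [hY]; ring
    rw [e, h8, zero_mul, add_zero]
  have hY3 : Y ^ 3 = 0 := by
    have e : Y ^ 3 = 8 * (a + 2 * b + 2 * b ^ 2) ^ 3 := by rw [hY]; ring
    rw [e, h8, zero_mul]
  have hYpow : ∀ m : ℕ, 3 ≤ m → Y ^ m = 0 := by
    intro m hm
    rw [← Nat.sub_add_cancel hm, pow_add, hY3, mul_zero]
  have hcoeffY : PowerSeries.coeff N Y = 0 := by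
    rw [hY, h2C, h4C, map_add, map_add, PowerSeries.coeff_C_mul,
      PowerSeries.coeff_C_mul, PowerSeries.coeff_C_mul, ha, hb, hb2]
    ring
  have hcoeffY2 : PowerSeries.coeff N (Y ^ 2) = 0 := by
    rw [hY2, h4C, PowerSeries.coeff_C_mul, ha2, mul_zero]
  have hcoeff1 : PowerSeries.coeff N (1 : PowerSeries (ZMod 8)) = 0 := by
    rw [PowerSeries.coeff_one, if_neg (by omega)]
  -- main computation
  have key : PowerSeries.coeff N
      (PowerSeries.map (Int.castRingHom (ZMod 8)) ((phi 1 * phi 2 ^ 2 * phi 4 ^ 4) ^ t)) = 0 := by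
    simp only [map_pow, map_mul, map_phi 1 le_rfl, map_phi 2 (by norm_num),
      map_phi 4 (by norm_num)]
    show PowerSeries.coeff N (((1 + 2 * a) * (1 + 2 * b) ^ 2 * (1 + 2 * c) ^ 4) ^ t) = 0
    rw [hc4, mul_one, hab, add_pow]
    rw [map_sum (PowerSeries.coeff (R := ZMod 8) N)]
    apply Finset.sum_eq_zero
    intro k hk
    rw [one_pow, one_mul, ← map_natCast ((PowerSeries.C (R := ZMod 8))) (t.choose k),
      PowerSeries.coeff_mul_C]
    rcases Nat.lt_or_ge (t - k) 3 with h3 | h3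
    · set j := t - k with hj
      interval_cases j
      · rw [pow_zero, hcoeff1, zero_mul]
      · rw [pow_one, hcoeffY, zero_mul]
      · rw [hcoeffY2, zero_mul]
    · rw [hYpow _ h3, map_zero, zero_mul]
  rw [PowerSeries.coeff_map] at key
  exact (ZMod.intCast_zmod_eq_zero_iff_dvd _ 8).mp key
end

section
/- For all odd integers t ≥ 1 and all integers n ≥ 0, the coefficient of q^{8n+5} in the formal power series ( φ(q)·φ(q²)²·φ(q⁴)⁴ )^t over ℤ is divisible by 8, and the coefficient of q^{8n+6} in the same series is divisible by 8. -/
open scoped Classical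

/-! ### Auxiliary material -/

/-- `S m = ∑_{k ≥ 1} q^{m k²}`, so that `φ(q^m) = 1 + 2 S m`. -/
noncomputable def S (m : ℕ) : PowerSeries ℤ :=
  PowerSeries.mk fun n => if ∃ k : ℕ, 0 < k ∧ n = m * k ^ 2 then 1 else 0

lemma phi_eq (m : ℕ) (hm : 0 < m) : phi m = 1 + 2 * S m := by
  ext n
  simp only [phi, S, PowerSeries.coeff_mk, map_add, PowerSeries.coeff_one]
  rw [show ((2:PowerSeries ℤ)) = PowerSeries.C 2 by norm_num, PowerSeries.coeff_C_mul,
    PowerSeries.coeff_mk]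
  by_cases h : n = 0
  · subst h
    have hno : ¬ ∃ k : ℕ, 0 < k ∧ 0 = m * k ^ 2 := by
      rintro ⟨k, hk, hk2⟩
      have : 0 < m * k ^ 2 := Nat.mul_pos hm (pow_pos hk 2)
      omega
    simp only [if_pos rfl, if_neg hno]; norm_num
  · simp only [if_neg h]
    split_ifs <;> norm_num

lemma add_pow_exists {R : Type*} [CommRing R] (x y : R) (t : ℕ) :
    ∃ E, (x + y) ^ t = x ^ t + y * E := by
  induction t with
  | zero => exact ⟨0, by ring⟩
  | succ t ih =>
    obtain ⟨E, hE⟩ := ih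
    exact ⟨E * (x + y) + x ^ t, by rw [pow_succ, hE]; ring⟩

lemma one_add_pow_exists {R : Type*} [CommRing R] (W : R) (t : ℕ) :
    ∃ E, (1 + W) ^ t = 1 + (t : R) * W + (t.choose 2 : R) * W ^ 2 + W ^ 3 * E := by
  induction t with
  | zero => exact ⟨0, by norm_num⟩
  | succ t ih =>
    obtain ⟨E, hE⟩ := ih
    refine ⟨(t.choose 2 : R) + E + W * E, ?_⟩
    have hc : (t + 1).choose 2 = t + t.choose 2 := by
      rw [Nat.choose_succ_succ, Nat.choose_one_right]
    rw [pow_succ, hE, hc]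
    push_cast
    ring

lemma no_sq_5 (n : ℕ) : ¬ ∃ k : ℕ, 0 < k ∧ 8 * n + 5 = 1 * k ^ 2 := by
  rintro ⟨k, -, h⟩
  have h' : ((8 * n + 5 : ℕ) : ZMod 8) = ((1 * k ^ 2 : ℕ) : ZMod 8) := by rw [h]
  push_cast at h'
  have h8 : (8 : ZMod 8) = 0 := by decide
  rw [h8] at h'
  simp at h'
  exact absurd h'.symm (by generalize (k : ZMod 8) = x; revert x; decide)

lemma no_sq_6 (n : ℕ) : ¬ ∃ k : ℕ, 0 < k ∧ 8 * n + 6 = 1 * k ^ 2 := by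
  rintro ⟨k, -, h⟩
  have h' : ((8 * n + 6 : ℕ) : ZMod 8) = ((1 * k ^ 2 : ℕ) : ZMod 8) := by rw [h]
  push_cast at h'
  have h8 : (8 : ZMod 8) = 0 := by decide
  rw [h8] at h'
  simp at h'
  exact absurd h'.symm (by generalize (k : ZMod 8) = x; revert x; decide)

lemma no_2sq_5 (n : ℕ) : ¬ ∃ k : ℕ, 0 < k ∧ 8 * n + 5 = 2 * k ^ 2 := by
  rintro ⟨k, -, h⟩
  have h2 : (2:ℕ) ∣ 8 * n + 5 := ⟨k ^ 2, h⟩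
  omega

lemma no_2sq_6 (n : ℕ) : ¬ ∃ k : ℕ, 0 < k ∧ 8 * n + 6 = 2 * k ^ 2 := by
  rintro ⟨k, -, h⟩
  have h2 : k ^ 2 = 4 * n + 3 := by omega
  have h' : ((k ^ 2 : ℕ) : ZMod 4) = ((4 * n + 3 : ℕ) : ZMod 4) := by rw [h2]
  push_cast at h'
  have h4 : (4 : ZMod 4) = 0 := by decide
  rw [h4] at h'
  simp at h'
  revert h'
  generalize (k : ZMod 4) = x
  revert x
  decide

lemma no_sumsq_6 (n k l : ℕ) : 8 * n + 6 ≠ 1 * k ^ 2 + 1 * l ^ 2 := by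
  intro h
  have h' : ((1 * k ^ 2 + 1 * l ^ 2 : ℕ) : ZMod 8) = ((8 * n + 6 : ℕ) : ZMod 8) := by rw [h]
  push_cast at h'
  have h8 : (8 : ZMod 8) = 0 := by decide
  rw [h8] at h'
  simp at h'
  revert h'
  generalize (k : ZMod 8) = x
  generalize (l : ZMod 8) = y
  revert x y
  decide

lemma no_2sumsq_5 (n k l : ℕ) : 8 * n + 5 ≠ 2 * k ^ 2 + 2 * l ^ 2 := by
  intro h
  have h2 : (2:ℕ) ∣ 8 * n + 5 := ⟨k ^ 2 + l ^ 2, by rw [h]; ring⟩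
  omega

lemma no_2sumsq_6 (n k l : ℕ) : 8 * n + 6 ≠ 2 * k ^ 2 + 2 * l ^ 2 := by
  intro h
  have h2 : k ^ 2 + l ^ 2 = 4 * n + 3 := by omega
  have h' : ((k ^ 2 + l ^ 2 : ℕ) : ZMod 4) = ((4 * n + 3 : ℕ) : ZMod 4) := by rw [h2]
  push_cast at h'
  have h4 : (4 : ZMod 4) = 0 := by decide
  rw [h4] at h'
  simp at h'
  revert h'
  generalize (k : ZMod 4) = x
  generalize (l : ZMod 4) = y
  revert x y
  decide

lemma coeff_S (m N : ℕ) :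
    PowerSeries.coeff N (S m) = if ∃ k : ℕ, 0 < k ∧ N = m * k ^ 2 then 1 else 0 :=
  PowerSeries.coeff_mk _ _

lemma coeff_S_eq_zero {m N : ℕ} (h : ¬ ∃ k : ℕ, 0 < k ∧ N = m * k ^ 2) :
    PowerSeries.coeff N (S m) = 0 := by rw [coeff_S, if_neg h]

lemma coeff_SS_eq_zero {m N : ℕ} (h : ∀ k l : ℕ, 0 < k → 0 < l → N ≠ m * k ^ 2 + m * l ^ 2) :
    PowerSeries.coeff N (S m * S m) = 0 := by
  rw [PowerSeries.coeff_mul]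
  apply Finset.sum_eq_zero
  rintro ⟨i, j⟩ hij
  rw [Finset.HasAntidiagonal.mem_antidiagonal] at hij
  rw [coeff_S, coeff_S]
  split_ifs with h1 h2
  · obtain ⟨k, hk, rfl⟩ := h1
    obtain ⟨l, hl, rfl⟩ := h2
    exact absurd hij.symm (h k l hk hl)
  · ring
  · ring
  · ring

lemma even_coeff_SS_odd {N : ℕ} (hN : ¬ 2 ∣ N) :
    (2 : ℤ) ∣ PowerSeries.coeff N (S 1 * S 1) := by
  have key : (((PowerSeries.coeff N (S 1 * S 1)) : ℤ) : ZMod 2) = 0 := by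
    rw [PowerSeries.coeff_mul, Finset.Nat.sum_antidiagonal_eq_sum_range_succ_mk]
    push_cast
    apply Finset.sum_involution (g := fun i _ => N - i)
    · intro i hi
      rw [Finset.mem_range] at hi
      have h1 : N - (N - i) = i := by omega
      rw [h1, mul_comm]
      exact CharTwo.add_self_eq_zero _
    · intro i hi hne
      rw [Finset.mem_range] at hi
      intro hEq
      exact hN ⟨i, by omega⟩
    · intro i hi
      rw [Finset.mem_range] at hi ⊢
      omega
    · intro i hi
      rw [Finset.mem_range] at hi
      omega
  have h2 := (ZMod.intCast_zmod_eq_zero_iff_dvd _ 2).mp key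
  exact_mod_cast h2

lemma coeff_intCast_mul (z : ℤ) (f : PowerSeries ℤ) (N : ℕ) :
    PowerSeries.coeff N ((z : PowerSeries ℤ) * f) = z * PowerSeries.coeff N f := by
  rw [← map_intCast (PowerSeries.C (R := ℤ)) z, PowerSeries.coeff_C_mul]
  simp

lemma key_expansion (t : ℕ) : ∃ G : PowerSeries ℤ,
    (phi 1 * phi 2 ^ 2 * phi 4 ^ 4) ^ t
      = 1 + ((2 * t : ℤ) : PowerSeries ℤ) * S 1 + ((4 * t : ℤ) : PowerSeries ℤ) * S 2
        + ((4 * t : ℤ) : PowerSeries ℤ) * (S 2 * S 2)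
        + ((4 * t.choose 2 : ℤ) : PowerSeries ℤ) * (S 1 * S 1)
        + ((8 : ℤ) : PowerSeries ℤ) * G := by
  set a := S 1 with ha
  set b := S 2 with hb
  set c := S 4 with hc
  set W : PowerSeries ℤ := 2*a + 4*b + 4*b^2 with hW
  set D : PowerSeries ℤ :=
    c + 3*c^2 + 4*c^3 + 2*c^4 + 4*b*c + 12*b*c^2 + 16*b*c^3 + 8*b*c^4
      + 4*b^2*c + 12*b^2*c^2 + 16*b^2*c^3 + 8*b^2*c^4
      + 2*a*c + 6*a*c^2 + 8*a*c^3 + 4*a*c^4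
      + a*b + 8*a*b*c + 24*a*b*c^2 + 32*a*b*c^3 + 16*a*b*c^4
      + a*b^2 + 8*a*b^2*c + 24*a*b^2*c^2 + 32*a*b^2*c^3 + 16*a*b^2*c^4 with hD
  have hQ : phi 1 * phi 2 ^ 2 * phi 4 ^ 4 = (1 + W) + 8 * D := by
    rw [phi_eq 1 one_pos, phi_eq 2 (by norm_num), phi_eq 4 (by norm_num), ← ha, ← hb, ← hc,
      hW, hD]
    ring
  obtain ⟨E₁, h1⟩ := add_pow_exists (1 + W) (8 * D) t
  obtain ⟨E₂, h2⟩ := one_add_pow_exists W t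
  refine ⟨(t.choose 2 : PowerSeries ℤ) * (2*b^2 + 2*b^4 + 2*a*b + 2*a*b^2 + 4*b^3)
    + (a + 2*b + 2*b^2)^3 * E₂ + D * E₁, ?_⟩
  rw [hQ, h1, h2, hW]
  push_cast
  ring

/-- For all odd `t ≥ 1` and all `n ≥ 0`, the coefficients of `q^(8n+5)` and `q^(8n+6)` in
`(φ(q)·φ(q²)²·φ(q⁴)⁴)^t` are divisible by 8. -/
theorem coeff_phi_prod_pow_5_and_6 (t : ℕ) (ht1 : 1 ≤ t) (ht : Odd t) (n : ℕ) :
    (8 : ℤ) ∣ PowerSeries.coeff (8 * n + 5) ((phi 1 * phi 2 ^ 2 * phi 4 ^ 4) ^ t) ∧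
    (8 : ℤ) ∣ PowerSeries.coeff (8 * n + 6) ((phi 1 * phi 2 ^ 2 * phi 4 ^ 4) ^ t) := by
  obtain ⟨G, hG⟩ := key_expansion t
  constructor
  · have hN0 : 8 * n + 5 ≠ 0 := by omega
    rw [hG]
    simp only [map_add, coeff_intCast_mul, PowerSeries.coeff_one, hN0, if_false]
    rw [coeff_S_eq_zero (no_sq_5 n), coeff_S_eq_zero (no_2sq_5 n),
      coeff_SS_eq_zero (fun k l hk hl => no_2sumsq_5 n k l)]
    obtain ⟨m, hm⟩ := even_coeff_SS_odd (N := 8 * n + 5) (by omega)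
    rw [hm]
    exact ⟨(t.choose 2 : ℤ) * m + PowerSeries.coeff (8 * n + 5) G, by push_cast; ring⟩
  · have hN0 : 8 * n + 6 ≠ 0 := by omega
    rw [hG]
    simp only [map_add, coeff_intCast_mul, PowerSeries.coeff_one, hN0, if_false]
    rw [coeff_S_eq_zero (no_sq_6 n), coeff_S_eq_zero (no_2sq_6 n),
      coeff_SS_eq_zero (fun k l hk hl => no_2sumsq_6 n k l),
      coeff_SS_eq_zero (fun k l hk hl => no_sumsq_6 n k l)]
    exact ⟨PowerSeries.coeff (8 * n + 6) G, by ring⟩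
end
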